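/- Let p be a prime and let K = F_p(x_1,...,x_{p²−1}) with k = F_p(x_1^p,...,x_{p²−1}^p). Let δ be the k-linear derivation of K with δ(x_i) = x_{i+1} (indices mod p²−1, so x_{p²} = x_1). Then δ^{p²} = δ, i.e., δ^{p^{j+2}} = δ^{p^j} for all j ≥ 0. -/

import Mathlib

universe u

open MvPolynomial

/-- The rational function field `K = F_p(x₁,…,x_{p²-1})`. -/
abbrev RatField (p : ℕ) : Type :=
  FractionRing (MvPolynomial (Fin (p ^ 2 - 1)) (ZMod p))

/-- The generator `x_i` of `K = F_p(x₁,…,x_{p²-1})`. -/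
noncomputable def xgen (p : ℕ) (i : Fin (p ^ 2 - 1)) : RatField p :=
  algebraMap (MvPolynomial (Fin (p ^ 2 - 1)) (ZMod p)) (RatField p) (X i)

open Finset Function in
/-- Iterated Leibniz rule for a derivation. -/
theorem iterLeibniz {R A : Type*} [CommSemiring R] [CommSemiring A] [Algebra R A]
    (D : Derivation R A A) (n : ℕ) (p q : A) :
    (⇑D)^[n] (p * q) =
      ∑ k ∈ range n.succ, (n.choose k • ((⇑D)^[n - k] p * (⇑D)^[k] q)) := by
  induction n with
  | zero => simp [Finset.range]
  | succ n IH =>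
    calc
      (⇑D)^[n + 1] (p * q) =
          D (∑ k ∈ range n.succ,
              n.choose k • ((⇑D)^[n - k] p * (⇑D)^[k] q)) := by
        rw [Function.iterate_succ_apply', IH]
      _ = (∑ k ∈ range n.succ,
            n.choose k • ((⇑D)^[n - k + 1] p * (⇑D)^[k] q)) +
          ∑ k ∈ range n.succ,
            n.choose k • ((⇑D)^[n - k] p * (⇑D)^[k + 1] q) := by
        rw [map_sum]
        simp_rw [map_nsmul, Derivation.leibniz, smul_eq_mul, Function.iterate_succ_apply',
          smul_add, sum_add_distrib]
        rw [add_comm]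
        congr 1
        exact sum_congr rfl fun k _ => by rw [mul_comm]
      _ = (∑ k ∈ range n.succ,
                n.choose k.succ • ((⇑D)^[n - k] p * (⇑D)^[k + 1] q)) +
              1 • ((⇑D)^[n + 1] p * (⇑D)^[0] q) +
            ∑ k ∈ range n.succ, n.choose k • ((⇑D)^[n - k] p * (⇑D)^[k + 1] q) :=
        ?_
      _ = ((∑ k ∈ range n.succ, n.choose k • ((⇑D)^[n - k] p * (⇑D)^[k + 1] q)) +
              ∑ k ∈ range n.succ,
                n.choose k.succ • ((⇑D)^[n - k] p * (⇑D)^[k + 1] q)) +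
            1 • ((⇑D)^[n + 1] p * (⇑D)^[0] q) := by
        rw [add_comm, add_assoc]
      _ = (∑ i ∈ range n.succ,
              (n + 1).choose (i + 1) • ((⇑D)^[n + 1 - (i + 1)] p * (⇑D)^[i + 1] q)) +
            1 • ((⇑D)^[n + 1] p * (⇑D)^[0] q) := by
        simp_rw [Nat.choose_succ_succ, Nat.succ_sub_succ, add_smul, sum_add_distrib]
      _ = ∑ k ∈ range n.succ.succ,
            n.succ.choose k • ((⇑D)^[n.succ - k] p * (⇑D)^[k] q) := by
        rw [sum_range_succ' _ n.succ, Nat.choose_zero_right, tsub_zero]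
    congr
    refine (sum_range_succ' _ _).trans (congr_arg₂ (· + ·) ?_ ?_)
    · rw [sum_range_succ, Nat.choose_succ_self, zero_smul, add_zero]
      refine sum_congr rfl fun k hk => ?_
      rw [mem_range] at hk
      congr
      omega
    · rw [Nat.choose_zero_right, tsub_zero]

/-- The `p`-th power of a derivation in characteristic `p` is a derivation. -/
noncomputable def pthPow (p : ℕ) [Fact p.Prime] {A : Type*} [CommRing A]
    [Algebra (ZMod p) A] [CharP A p] (D : Derivation (ZMod p) A A) :
    Derivation (ZMod p) A A where
  toLinearMap := D.toLinearMap ^ p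
  map_one_eq_zero' := by
    have hp : p.Prime := Fact.out
    show (D.toLinearMap ^ p) 1 = 0
    rw [Module.End.pow_apply, Derivation.coeFn_coe]
    have h := Function.iterate_add_apply (⇑D) (p - 1) 1 (1 : A)
    rw [Nat.sub_add_cancel hp.pos] at h
    rw [h]
    simp only [Function.iterate_one, Derivation.map_one_eq_zero]
    exact Function.iterate_fixed (map_zero D) _
  leibniz' a b := by
    show (D.toLinearMap ^ p) (a * b) = a • (D.toLinearMap ^ p) b + b • (D.toLinearMap ^ p) a
    have hp : p.Prime := Fact.out
    simp only [Module.End.pow_apply, Derivation.coeFn_coe, smul_eq_mul]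
    rw [iterLeibniz D p a b, Finset.sum_range_succ,
      Finset.sum_eq_single_of_mem 0 (Finset.mem_range.mpr hp.pos)]
    · simp only [Nat.choose_zero_right, one_smul, Nat.sub_zero, Function.iterate_zero_apply,
        Nat.choose_self, Nat.sub_self, smul_eq_mul]
      ring
    · intro k hk hk0
      have hdvd : (p : A) ∣ ((p.choose k : ℕ) : A) := by
        obtain ⟨c, hc⟩ := hp.dvd_choose_self hk0 (Finset.mem_range.mp hk)
        exact ⟨(c : A), by rw [hc]; push_cast; ring⟩
      have hzero : ((p.choose k : ℕ) : A) = 0 := by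
        rcases hdvd with ⟨c, hc⟩
        rw [hc, CharP.cast_eq_zero A p, zero_mul]
      rw [nsmul_eq_mul, hzero, zero_mul]

@[simp] theorem pthPow_coe (p : ℕ) [Fact p.Prime] {A : Type*} [CommRing A]
    [Algebra (ZMod p) A] [CharP A p] (D : Derivation (ZMod p) A A) :
    ⇑(pthPow p D) = (⇑D)^[p] := by
  funext x
  rw [show pthPow p D x = (D.toLinearMap ^ p) x from rfl, Module.End.pow_apply,
    Derivation.coeFn_coe]

/-- A `ZMod p`-derivation of `K = F_p(x₁,…,x_{p²-1})` is determined by its values on the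
generators. -/
theorem ratField_derivation_ext (p : ℕ) [Fact p.Prime]
    (D₁ D₂ : Derivation (ZMod p) (RatField p) (RatField p))
    (h : ∀ i, D₁ (xgen p i) = D₂ (xgen p i)) : D₁ = D₂ := by
  set A := MvPolynomial (Fin (p ^ 2 - 1)) (ZMod p)
  have hcomp : D₁.compAlgebraMap A = D₂.compAlgebraMap A :=
    MvPolynomial.derivation_ext fun i => by
      exact h i
  have key : ∀ q : A, D₁ (algebraMap A (RatField p) q) = D₂ (algebraMap A (RatField p) q) := by
    intro q
    have := DFunLike.congr_fun hcomp q
    simpa only [Derivation.compAlgebraMap_apply] using this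
  ext z
  obtain ⟨⟨a, s⟩, hs⟩ := IsLocalization.surj (nonZeroDivisors A) z
  have hsne : algebraMap A (RatField p) (s : A) ≠ 0 :=
    IsFractionRing.to_map_ne_zero_of_mem_nonZeroDivisors s.2
  have e1 : D₁ (algebraMap A (RatField p) a) =
      z * D₁ (algebraMap A (RatField p) (s : A)) + algebraMap A (RatField p) (s : A) * D₁ z := by
    rw [← hs, Derivation.leibniz, smul_eq_mul, smul_eq_mul]
  have e2 : D₂ (algebraMap A (RatField p) a) =
      z * D₂ (algebraMap A (RatField p) (s : A)) + algebraMap A (RatField p) (s : A) * D₂ z := by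
    rw [← hs, Derivation.leibniz, smul_eq_mul, smul_eq_mul]
  refine mul_left_cancel₀ hsne ?_
  linear_combination (key a) - e1 + e2 - z * (key (s : A))

set_option maxHeartbeats 1000000 in
/-- Let `K = F_p(x₁,…,x_{p²-1})` and let `δ` be the (automatically `k`-linear, where
`k = F_p(x₁^p,…,x_{p²-1}^p)`) derivation with `δ(x_i) = x_{i+1}` cyclically
(indices taken mod `p² - 1`, so `x_{p²} = x₁`).  Then `δ^{p^{j+2}} = δ^{p^j}`
for all `j ≥ 0`; in particular `δ^{p²} = δ`. -/
theorem cyclic_derivation_pow_periodic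
    (p : ℕ) [Fact p.Prime] [NeZero (p ^ 2 - 1)]
    (δ : Derivation (ZMod p) (RatField p) (RatField p))
    (hδ : ∀ i : Fin (p ^ 2 - 1), δ (xgen p i) = xgen p (i + 1)) :
    (∀ j : ℕ, (⇑δ)^[p ^ (j + 2)] = (⇑δ)^[p ^ j]) ∧ (⇑δ)^[p ^ 2] = ⇑δ := by
  have hp : p.Prime := Fact.out
  haveI : CharP (RatField p) p :=
    charP_of_injective_algebraMap (algebraMap (ZMod p) (RatField p)).injective p
  -- iterates on generators
  open Fin.NatCast in
  have hgen : ∀ (n : ℕ) (i : Fin (p ^ 2 - 1)),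
      (⇑δ)^[n] (xgen p i) = xgen p (i + (n : Fin (p ^ 2 - 1))) := by
    intro n
    induction n with
    | zero => intro i; simp
    | succ n ih =>
      intro i
      rw [Function.iterate_succ_apply, hδ i, ih (i + 1)]
      congr 1
      push_cast
      rw [add_assoc, add_comm 1]
  have h1le : 1 ≤ p ^ 2 := Nat.one_le_pow _ _ hp.pos
  open Fin.NatCast in
  have hcast : ((p ^ 2 : ℕ) : Fin (p ^ 2 - 1)) = 1 := by
    have hn : (p ^ 2 : ℕ) = (p ^ 2 - 1) + 1 := (Nat.sub_add_cancel h1le).symm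
    rw [congrArg (Nat.cast : ℕ → Fin (p ^ 2 - 1)) hn]
    push_cast
    rw [Fin.natCast_self, zero_add]
  -- δ^[p²] as a derivation
  set D2 : Derivation (ZMod p) (RatField p) (RatField p) := pthPow p (pthPow p δ) with hD2
  have hD2coe : ⇑D2 = (⇑δ)^[p ^ 2] := by
    rw [hD2, pthPow_coe, pthPow_coe, ← Function.iterate_mul, ← pow_two]
  have hD2eq : D2 = δ := by
    refine ratField_derivation_ext p D2 δ fun i => ?_
    rw [show D2 (xgen p i) = (⇑δ)^[p ^ 2] (xgen p i) from congrFun hD2coe _,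
      hgen, hδ i, hcast]
  have hiter : (⇑δ)^[p ^ 2] = ⇑δ := by rw [← hD2coe, hD2eq]
  refine ⟨fun j => ?_, hiter⟩
  have hpow : p ^ (j + 2) = p ^ 2 * p ^ j := by ring
  rw [hpow, Function.iterate_mul, hiter]
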